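/- arXiv:1404.3906 — 2 statements merged into one kernel-verified Lean document; each statement's English description precedes it below -/
import Mathlib

section
/- For every natural number n, the 2-abelian complexity of the Thue–Morse word satisfies P(8n+4) + P(4n+2) = P(8n+3) + P(4n+3) (equivalently, P(8n+4) = P(8n+3) + P(4n+3) − P(4n+2)). -/
open Fin.NatCast in
/-- The Thue–Morse sequence: sum of binary digits of `n`, mod 2. -/
def tm (n : ℕ) : Fin 2 := ((Nat.digits 2 n).sum : Fin 2)

/-- The factor of the Thue–Morse word of length `n` starting at position `i`. -/
def tmWord (i n : ℕ) : List (Fin 2) := (List.range n).map (fun j => tm (i + j))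

/-- A binary word is a factor of the Thue–Morse word. -/
def IsFactor (w : List (Fin 2)) : Prop := ∃ i : ℕ, w = tmWord i w.length

/-- Number of occurrences of the word `x` as a factor of `u`. -/
def occCount (u x : List (Fin 2)) : ℕ :=
  ((List.range u.length).filter (fun i => (u.drop i).take x.length = x)).length

/-- Two binary words (of equal length) are 2-abelian equivalent: same first letter,
same last letter, and the same number of occurrences of every word of length 2. -/
def TwoAbelianEquiv (u v : List (Fin 2)) : Prop :=
  u.length = v.length ∧ u.take 1 = v.take 1 ∧
  u.drop (u.length - 1) = v.drop (v.length - 1) ∧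
  ∀ x : List (Fin 2), x.length = 2 → occCount u x = occCount v x

/-- `P n` is the 2-abelian complexity of the Thue–Morse word: the number of
2-abelian equivalence classes of factors of length `n`. -/
noncomputable def P (n : ℕ) : ℕ :=
  Nat.card (Quot (fun u v : {w : List (Fin 2) // w.length = n ∧ IsFactor w} =>
    TwoAbelianEquiv u.1 v.1))

/-- `pword w` counts the pairs in `w`: the total number of occurrences of `00` and `11`. -/
def pword (w : List (Fin 2)) : ℕ := occCount w [0, 0] + occCount w [1, 1]

/-- The set of possible pair counts of Thue–Morse factors of length `n`. -/
def pairs (n : ℕ) : Set ℕ :=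
  { m | ∃ w : List (Fin 2), w.length = n ∧ IsFactor w ∧ pword w = m }

/-- The set of possible pair counts of Thue–Morse factors of length `n`
occurring at some odd position (pure odd factors). -/
def PAIRS (n : ℕ) : Set ℕ := { m | ∃ i : ℕ, i % 2 = 1 ∧ pword (tmWord i n) = m }

section TMBasics

lemma tm_zero : tm 0 = 0 := by simp [tm]

open Fin.NatCast in
lemma tm_rec (n : ℕ) (hn : n ≠ 0) : tm n = ((n % 2 : ℕ) : Fin 2) + tm (n / 2) := by
  unfold tm
  rw [Nat.digits_def' (by norm_num : 1 < 2) (Nat.pos_of_ne_zero hn)]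
  push_cast [List.sum_cons]
  ring

lemma tm_even (j : ℕ) : tm (2 * j) = tm j := by
  rcases Nat.eq_zero_or_pos j with h | h
  · simp [h]
  · rw [tm_rec (2 * j) (by omega)]
    simp [Nat.mul_mod_right, Nat.mul_div_cancel_left _ (by norm_num : 0 < 2)]

lemma tm_odd (j : ℕ) : tm (2 * j + 1) = tm j + 1 := by
  rw [tm_rec (2 * j + 1) (by omega)]
  have h1 : (2 * j + 1) % 2 = 1 := by omega
  have h2 : (2 * j + 1) / 2 = j := by omega
  rw [h1, h2]
  simp [add_comm]

lemma fin2_cases (a : Fin 2) : a = 0 ∨ a = 1 := by omega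

lemma fin2_add_one_ne (a : Fin 2) : a + 1 ≠ a := by
  rcases fin2_cases a with h | h <;> simp [h]

lemma fin2_add_one_add_one (a : Fin 2) : a + 1 + 1 = a := by
  rcases fin2_cases a with h | h <;> simp [h]

lemma fin2_val_add_one (a : Fin 2) : (a + 1).val + a.val = 1 := by
  rcases fin2_cases a with h | h <;> simp [h]

lemma tm_one : tm 1 = 1 := by rw [tm_rec 1 one_ne_zero]; simp [tm_zero]

lemma tm_flip : ∀ K m, m < 2 ^ K → tm (m + 2 ^ K) = tm m + 1 := by
  intro K
  induction K with
  | zero =>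
    intro m hm
    have hm0 : m = 0 := by omega
    subst hm0
    norm_num [tm_one, tm_zero]
  | succ K ih =>
    intro m hm
    rcases Nat.even_or_odd m with ⟨r, hr⟩ | ⟨r, hr⟩
    · have hr' : r < 2 ^ K := by omega
      have h : m + 2 ^ (K + 1) = 2 * (r + 2 ^ K) := by rw [pow_succ]; omega
      rw [h, tm_even, ih r hr', hr, show r + r = 2 * r by ring, tm_even]
    · have hr' : r < 2 ^ K := by omega
      have h : m + 2 ^ (K + 1) = 2 * (r + 2 ^ K) + 1 := by rw [pow_succ]; omega
      rw [h, tm_odd, ih r hr', hr, tm_odd]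

end TMBasics

section Windows

/-- indicator that positions i, i+1 of Thue-Morse are equal -/
def Ebit (i : ℕ) : ℕ := if tm i = tm (i + 1) then 1 else 0

/-- number of equal adjacent pairs among the m+1 letters starting at i (m gaps) -/
def qe (i m : ℕ) : ℕ := ∑ k ∈ Finset.range m, Ebit (i + k)

/-- number of ones in the window of length m starting at i -/
def ones (i m : ℕ) : ℕ := ∑ k ∈ Finset.range m, (tm (i + k)).val

lemma Ebit_le (i : ℕ) : Ebit i ≤ 1 := by unfold Ebit; split <;> omega

lemma Ebit_even (k : ℕ) : Ebit (2 * k) = 0 := by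
  have h : tm (2 * k + 1) = tm (2 * k) + 1 := by rw [tm_even, tm_odd]
  unfold Ebit
  rw [if_neg]
  rw [h]
  exact fun hc => fin2_add_one_ne _ hc.symm

lemma Ebit_odd (k : ℕ) : Ebit (2 * k + 1) + Ebit k = 1 := by
  unfold Ebit
  rw [show 2 * k + 1 + 1 = 2 * (k + 1) from by ring, tm_even, tm_odd]
  rcases fin2_cases (tm k) with h1 | h1 <;> rcases fin2_cases (tm (k + 1)) with h2 | h2 <;>
    simp [h1, h2]

lemma qe_zero (i : ℕ) : qe i 0 = 0 := by simp [qe]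

lemma qe_succ (i m : ℕ) : qe i (m + 1) = qe i m + Ebit (i + m) := by
  unfold qe; rw [Finset.sum_range_succ]

lemma qe_shift (i m : ℕ) : qe i (m + 1) = Ebit i + qe (i + 1) m := by
  unfold qe
  rw [Finset.sum_range_succ']
  simp [add_comm, add_assoc, add_left_comm]

lemma qe_le (i m : ℕ) : qe i m ≤ m := by
  calc qe i m ≤ ∑ _k ∈ Finset.range m, 1 := Finset.sum_le_sum (fun k _ => Ebit_le _)
    _ = m := by simp

lemma qA : ∀ m j, qe (2 * j) (2 * m + 1) + qe j m = m := by
  intro m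
  induction m with
  | zero => intro j; simp [qe, Ebit_even]
  | succ m ih =>
    intro j
    have g : 2 * (m + 1) + 1 = 2 * m + 1 + 1 + 1 := by ring
    rw [g]
    have e1 : qe (2 * j) (2 * m + 1 + 1 + 1) = qe (2 * j) (2 * m + 1 + 1) + Ebit (2 * j + (2 * m + 1 + 1)) := qe_succ _ _
    have e2 : qe (2 * j) (2 * m + 1 + 1) = qe (2 * j) (2 * m + 1) + Ebit (2 * j + (2 * m + 1)) := qe_succ _ _
    have e3 : qe j (m + 1) = qe j m + Ebit (j + m) := qe_succ _ _
    have h2 : Ebit (2 * j + (2 * m + 1 + 1)) = 0 := by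
      rw [show 2 * j + (2 * m + 1 + 1) = 2 * (j + m + 1) from by ring, Ebit_even]
    have h3 : Ebit (2 * j + (2 * m + 1)) + Ebit (j + m) = 1 := by
      rw [show 2 * j + (2 * m + 1) = 2 * (j + m) + 1 from by ring]; exact Ebit_odd (j + m)
    have := ih j
    omega
lemma qB : ∀ m j, qe (2 * j) (2 * m) + qe j m = m := by
  intro m
  induction m with
  | zero => intro j; simp [qe]
  | succ m ih =>
    intro j
    have g : 2 * (m + 1) = 2 * m + 1 + 1 := by ring
    rw [g]
    have e1 : qe (2 * j) (2 * m + 1 + 1) = qe (2 * j) (2 * m + 1) + Ebit (2 * j + (2 * m + 1)) := qe_succ _ _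
    have e2 : qe (2 * j) (2 * m + 1) = qe (2 * j) (2 * m) + Ebit (2 * j + 2 * m) := qe_succ _ _
    have e3 : qe j (m + 1) = qe j m + Ebit (j + m) := qe_succ _ _
    have h2 : Ebit (2 * j + 2 * m) = 0 := by
      rw [show 2 * j + 2 * m = 2 * (j + m) from by ring, Ebit_even]
    have h3 : Ebit (2 * j + (2 * m + 1)) + Ebit (j + m) = 1 := by
      rw [show 2 * j + (2 * m + 1) = 2 * (j + m) + 1 from by ring]; exact Ebit_odd (j + m)
    have := ih j
    omega
lemma qC : ∀ m j, qe (2 * j + 1) (2 * m) + qe j m = m := by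
  intro m
  induction m with
  | zero => intro j; simp [qe]
  | succ m ih =>
    intro j
    have g : 2 * (m + 1) = 2 * m + 1 + 1 := by ring
    rw [g]
    have e1 : qe (2 * j + 1) (2 * m + 1 + 1) = qe (2 * j + 1) (2 * m + 1) + Ebit (2 * j + 1 + (2 * m + 1)) := qe_succ _ _
    have e2 : qe (2 * j + 1) (2 * m + 1) = qe (2 * j + 1) (2 * m) + Ebit (2 * j + 1 + 2 * m) := qe_succ _ _
    have e3 : qe j (m + 1) = qe j m + Ebit (j + m) := qe_succ _ _
    have h2 : Ebit (2 * j + 1 + (2 * m + 1)) = 0 := by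
      rw [show 2 * j + 1 + (2 * m + 1) = 2 * (j + m + 1) from by ring, Ebit_even]
    have h3 : Ebit (2 * j + 1 + 2 * m) + Ebit (j + m) = 1 := by
      rw [show 2 * j + 1 + 2 * m = 2 * (j + m) + 1 from by ring]; exact Ebit_odd (j + m)
    have := ih j
    omega
lemma qD : ∀ m j, qe (2 * j + 1) (2 * m + 1) + qe j (m + 1) = m + 1 := by
  intro m
  induction m with
  | zero =>
    intro j
    have h1 : qe (2 * j + 1) 1 = Ebit (2 * j + 1) := by simp [qe]
    have h2 : qe j 1 = Ebit j := by simp [qe]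
    have h3 := Ebit_odd j
    rw [h1, h2]
    omega
  | succ m ih =>
    intro j
    have g : 2 * (m + 1) + 1 = 2 * m + 1 + 1 + 1 := by ring
    rw [g]
    have e1 : qe (2 * j + 1) (2 * m + 1 + 1 + 1) = qe (2 * j + 1) (2 * m + 1 + 1) + Ebit (2 * j + 1 + (2 * m + 1 + 1)) := qe_succ _ _
    have e2 : qe (2 * j + 1) (2 * m + 1 + 1) = qe (2 * j + 1) (2 * m + 1) + Ebit (2 * j + 1 + (2 * m + 1)) := qe_succ _ _
    have e3 : qe j (m + 1 + 1) = qe j (m + 1) + Ebit (j + (m + 1)) := qe_succ _ _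
    have h2 : Ebit (2 * j + 1 + (2 * m + 1)) = 0 := by
      rw [show 2 * j + 1 + (2 * m + 1) = 2 * (j + m + 1) from by ring, Ebit_even]
    have h3 : Ebit (2 * j + 1 + (2 * m + 1 + 1)) + Ebit (j + (m + 1)) = 1 := by
      rw [show 2 * j + 1 + (2 * m + 1 + 1) = 2 * (j + m + 1) + 1 from by ring]
      exact Ebit_odd (j + m + 1)
    have := ih j
    omega
lemma qe_step (i m : ℕ) : qe (i + 1) m + Ebit i = qe i m + Ebit (i + m) := by
  have h1 := qe_shift i m
  have h2 := qe_succ i m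
  omega

lemma ones_succ (i m : ℕ) : ones i (m + 1) = ones i m + (tm (i + m)).val := by
  unfold ones; rw [Finset.sum_range_succ]

lemma ones_shift (i m : ℕ) : ones i (m + 1) = (tm i).val + ones (i + 1) m := by
  unfold ones
  rw [Finset.sum_range_succ']
  simp [add_comm, add_assoc, add_left_comm]

lemma tm_val_pair (k : ℕ) : (tm (2 * k)).val + (tm (2 * k + 1)).val = 1 := by
  rw [tm_even, tm_odd]
  have := fin2_val_add_one (tm k); omega

lemma onesA : ∀ m j, ones (2 * j) (2 * m) = m := by
  intro m
  induction m with
  | zero => intro j; simp [ones]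
  | succ m ih =>
    intro j
    have g : 2 * (m + 1) = 2 * m + 1 + 1 := by ring
    rw [g]
    have e1 : ones (2 * j) (2 * m + 1 + 1) = ones (2 * j) (2 * m + 1) + (tm (2 * j + (2 * m + 1))).val := ones_succ _ _
    have e2 : ones (2 * j) (2 * m + 1) = ones (2 * j) (2 * m) + (tm (2 * j + 2 * m)).val := ones_succ _ _
    have h2 : (tm (2 * j + 2 * m)).val + (tm (2 * j + (2 * m + 1))).val = 1 := by
      rw [show 2 * j + (2 * m + 1) = 2 * (j + m) + 1 from by ring,
          show 2 * j + 2 * m = 2 * (j + m) from by ring]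
      exact tm_val_pair (j + m)
    have := ih j
    omega
lemma onesB (m j : ℕ) : ones (2 * j) (2 * m + 1) = m + (tm (j + m)).val := by
  rw [ones_succ, onesA, show 2 * j + 2 * m = 2 * (j + m) from by ring, tm_even]

lemma onesC (m j : ℕ) : ones (2 * j + 1) (2 * m + 1) + (tm j).val = m + 1 := by
  have h1 : ones (2 * j) (2 * m + 1 + 1) = (tm (2 * j)).val + ones (2 * j + 1) (2 * m + 1) :=
    ones_shift (2 * j) (2 * m + 1)
  have h2 : ones (2 * j) (2 * (m + 1)) = m + 1 := onesA (m + 1) j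
  rw [show 2 * (m + 1) = 2 * m + 1 + 1 from by ring] at h2
  rw [tm_even] at h1
  omega

lemma onesD (m j : ℕ) : ones (2 * j + 1) (2 * m) + (tm j).val = m + (tm (j + m)).val := by
  have h1 : ones (2 * j) (2 * m + 1) = (tm (2 * j)).val + ones (2 * j + 1) (2 * m) :=
    ones_shift (2 * j) (2 * m)
  have h2 := onesB m j
  rw [tm_even] at h1
  omega

end Windows
section Words

/-- count of adjacent pairs (x,y) in a word -/
def cnt : List (Fin 2) → Fin 2 → Fin 2 → ℕ
  | a :: b :: rest, x, y => (if a = x ∧ b = y then 1 else 0) + cnt (b :: rest) x y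
  | _, _, _ => 0

lemma cnt_nil (x y : Fin 2) : cnt [] x y = 0 := rfl
lemma cnt_single (a x y : Fin 2) : cnt [a] x y = 0 := rfl
lemma cnt_cons (a b : Fin 2) (rest : List (Fin 2)) (x y : Fin 2) :
    cnt (a :: b :: rest) x y = (if a = x ∧ b = y then 1 else 0) + cnt (b :: rest) x y := rfl

lemma occCount_cons (a : Fin 2) (u x : List (Fin 2)) :
    occCount (a :: u) x = (if ((a :: u).take x.length) = x then 1 else 0) + occCount u x := by
  unfold occCount
  rw [List.length_cons, ← List.countP_eq_length_filter, ← List.countP_eq_length_filter,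
      List.range_succ_eq_map, List.countP_cons, List.countP_map]
  simp only [List.drop_zero]
  rw [add_comm]
  congr 1
  simp

lemma occ_eq_cnt (x y : Fin 2) : ∀ u : List (Fin 2), occCount u [x, y] = cnt u x y := by
  intro u
  induction u with
  | nil => simp [occCount, cnt_nil]
  | cons a v ih =>
    rw [occCount_cons, ih]
    cases v with
    | nil =>
      simp [cnt_single, occCount, cnt_nil]
    | cons b w =>
      rw [cnt_cons]
      congr 1
      simp only [List.length_cons, List.take]
      by_cases h1 : a = x <;> by_cases h2 : b = y
      · subst h1; subst h2; simp
      · subst h1; simp [h2]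
      · simp [h1]
      · simp [h1]

/-- number of ones in a word -/
def count1 (u : List (Fin 2)) : ℕ := (u.map Fin.val).sum

lemma count1_cons (a : Fin 2) (u : List (Fin 2)) : count1 (a :: u) = a.val + count1 u := by
  simp [count1]

lemma head_cons (a : Fin 2) (u : List (Fin 2)) (h) : (a :: u).head h = a := rfl

lemma words_i1 : ∀ (u : List (Fin 2)) (_ : u ≠ []),
    cnt u 0 0 + cnt u 0 1 + cnt u 1 0 + cnt u 1 1 + 1 = u.length := by
  intro u
  induction u with
  | nil => intro h; exact absurd rfl h
  | cons a v ih =>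
    intro _
    cases v with
    | nil => simp [cnt_single]
    | cons b w =>
      have hv : (b :: w) ≠ [] := by simp
      have := ih hv
      simp only [cnt_cons, List.length_cons] at *
      rcases fin2_cases a with ha | ha <;> rcases fin2_cases b with hb | hb <;>
        subst ha <;> subst hb <;> simp at * <;> omega

lemma words_i2 : ∀ (u : List (Fin 2)) (h : u ≠ []),
    cnt u 0 1 + (u.head h).val = cnt u 1 0 + (u.getLast h).val := by
  intro u
  induction u with
  | nil => intro h; exact absurd rfl h
  | cons a v ih =>
    intro h
    cases v with
    | nil => simp [cnt_single]
    | cons b w =>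
      have hv : (b :: w) ≠ [] := by simp
      have IH := ih hv
      have hlast : (a :: b :: w).getLast h = (b :: w).getLast hv := by
        rw [List.getLast_cons hv]
      rw [hlast]
      simp only [cnt_cons, head_cons] at *
      rcases fin2_cases a with ha | ha <;> rcases fin2_cases b with hb | hb <;>
        subst ha <;> subst hb <;> simp at * <;> omega

lemma words_i3 : ∀ (u : List (Fin 2)) (h : u ≠ []),
    cnt u 0 0 + 2 * count1 u + 1 =
      cnt u 1 1 + u.length + (u.getLast h).val + (u.head h).val := by
  intro u
  induction u with
  | nil => intro h; exact absurd rfl h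
  | cons a v ih =>
    intro h
    cases v with
    | nil =>
      simp only [cnt_single, count1_cons, List.length_cons, List.length_nil,
        List.getLast_singleton, head_cons]
      simp [count1]
      omega
    | cons b w =>
      have hv : (b :: w) ≠ [] := by simp
      have IH := ih hv
      have hlast : (a :: b :: w).getLast h = (b :: w).getLast hv := by
        rw [List.getLast_cons hv]
      rw [hlast]
      simp only [cnt_cons, head_cons, count1_cons, List.length_cons] at *
      rcases fin2_cases a with ha | ha <;> rcases fin2_cases b with hb | hb <;>
        subst ha <;> subst hb <;> simp at * <;> omega

lemma words_i4 : ∀ (u : List (Fin 2)) (h : u ≠ []),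
    count1 u = cnt u 0 1 + cnt u 1 1 + (u.head h).val := by
  intro u
  induction u with
  | nil => intro h; exact absurd rfl h
  | cons a v ih =>
    intro h
    cases v with
    | nil => simp [cnt_single, count1, head_cons]
    | cons b w =>
      have hv : (b :: w) ≠ [] := by simp
      have IH := ih hv
      simp only [cnt_cons, head_cons, count1_cons] at *
      rcases fin2_cases a with ha | ha <;> rcases fin2_cases b with hb | hb <;>
        subst ha <;> subst hb <;> simp at * <;> omega

end Words
section TmWordLemmas

lemma tmWord_length (i n : ℕ) : (tmWord i n).length = n := by simp [tmWord]

lemma tmWord_zero (i : ℕ) : tmWord i 0 = [] := by simp [tmWord]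

lemma tmWord_succ (i n : ℕ) : tmWord i (n + 1) = tm i :: tmWord (i + 1) n := by
  unfold tmWord
  rw [List.range_succ_eq_map, List.map_cons, List.map_map]
  refine congrArg₂ List.cons (by simp) ?_
  apply List.map_congr_left
  intro k _
  simp only [Function.comp_apply]
  congr 1
  omega

lemma tmWord_ne_nil (i n : ℕ) : tmWord i (n + 1) ≠ [] := by
  rw [tmWord_succ]; simp

lemma tmWord_head (i n : ℕ) (h) : (tmWord i (n + 1)).head h = tm i := by
  simp only [tmWord_succ]
  rfl

lemma tmWord_getLast (i n : ℕ) (h) : (tmWord i (n + 1)).getLast h = tm (i + n) := by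
  induction n generalizing i with
  | zero => simp only [tmWord_succ, tmWord_zero]; simp
  | succ n ih =>
    have hh : tmWord i (n + 1 + 1) = tm i :: tmWord (i + 1) (n + 1) := tmWord_succ _ _
    simp only [hh]
    rw [List.getLast_cons (tmWord_ne_nil _ _), ih (i + 1) (tmWord_ne_nil _ _)]
    congr 1
    omega

lemma tmWord_take_one (i n : ℕ) : (tmWord i (n + 1)).take 1 = [tm i] := by
  rw [tmWord_succ]; simp

lemma list_drop_pred (u : List (Fin 2)) (h : u ≠ []) :
    u.drop (u.length - 1) = [u.getLast h] := by
  induction u with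
  | nil => exact absurd rfl h
  | cons a v ih =>
    cases v with
    | nil => simp
    | cons b w =>
      have hv : (b :: w) ≠ [] := by simp
      rw [List.getLast_cons hv]
      have : (a :: b :: w).length - 1 = ((b :: w).length - 1) + 1 := by
        simp
      rw [this, List.drop_succ_cons, ih hv]

lemma tmWord_cnt_q :
    ∀ n i, cnt (tmWord i (n + 1)) 0 0 + cnt (tmWord i (n + 1)) 1 1 = qe i n := by
  intro n
  induction n with
  | zero => intro i; rw [tmWord_succ, tmWord_zero]; simp [cnt_single, qe_zero]
  | succ n ih =>
    intro i
    have h1 : tmWord i (n + 1 + 1) = tm i :: tm (i + 1) :: tmWord (i + 1 + 1) n := by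
      rw [tmWord_succ, tmWord_succ]
    have h2 : tmWord (i + 1) (n + 1) = tm (i + 1) :: tmWord (i + 1 + 1) n := tmWord_succ _ _
    rw [h1, cnt_cons, cnt_cons, ← h2]
    have IH := ih (i + 1)
    have hq : qe i (n + 1) = Ebit i + qe (i + 1) n := qe_shift i n
    have hE : (if tm i = 0 ∧ tm (i + 1) = 0 then 1 else 0) +
        (if tm i = 1 ∧ tm (i + 1) = 1 then 1 else 0) = Ebit i := by
      unfold Ebit
      rcases fin2_cases (tm i) with h | h <;> rcases fin2_cases (tm (i + 1)) with h' | h' <;>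
        simp [h, h']
    omega

lemma tmWord_count1 : ∀ n i, count1 (tmWord i n) = ones i n := by
  intro n
  induction n with
  | zero => intro i; rw [tmWord_zero]; simp [count1, ones]
  | succ n ih =>
    intro i
    rw [tmWord_succ, count1_cons, ih (i + 1), ones_shift]

end TmWordLemmas
section Characterization

/-- invariant tuple of a word -/
def psi (u : List (Fin 2)) : List (Fin 2) × List (Fin 2) × ℕ × ℕ :=
  (u.take 1, u.drop (u.length - 1), count1 u, cnt u 0 0 + cnt u 1 1)

lemma take_one_head (u : List (Fin 2)) (h : u ≠ []) : u.take 1 = [u.head h] := by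
  cases u with
  | nil => exact absurd rfl h
  | cons a v => rfl

lemma equiv_iff_psi (u v : List (Fin 2)) (hu : u ≠ []) (hlen : u.length = v.length) :
    TwoAbelianEquiv u v ↔ psi u = psi v := by
  have hv : v ≠ [] := by
    intro h
    subst h
    simp at hlen
    exact hu hlen
  constructor
  · rintro ⟨h1, h2, h3, h4⟩
    have hhead : u.head hu = v.head hv := by
      have := (take_one_head u hu).symm.trans (h2.trans (take_one_head v hv))
      injection this
    unfold psi
    refine Prod.ext h2 (Prod.ext h3 (Prod.ext ?_ ?_))
    · simp only
      rw [words_i4 u hu, words_i4 v hv, hhead,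
          ← occ_eq_cnt 0 1 u, ← occ_eq_cnt 0 1 v, ← occ_eq_cnt 1 1 u, ← occ_eq_cnt 1 1 v,
          h4 [0,1] rfl, h4 [1,1] rfl]
    · simp only
      rw [← occ_eq_cnt 0 0 u, ← occ_eq_cnt 0 0 v, ← occ_eq_cnt 1 1 u, ← occ_eq_cnt 1 1 v,
          h4 [0,0] rfl, h4 [1,1] rfl]
  · intro h
    unfold psi at h
    have htake : u.take 1 = v.take 1 := congrArg Prod.fst h
    have hdrop : u.drop (u.length - 1) = v.drop (v.length - 1) := congrArg (Prod.fst ∘ Prod.snd) h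
    have hc1 : count1 u = count1 v := congrArg (Prod.fst ∘ Prod.snd ∘ Prod.snd) h
    have hpair : cnt u 0 0 + cnt u 1 1 = cnt v 0 0 + cnt v 1 1 :=
      congrArg (Prod.snd ∘ Prod.snd ∘ Prod.snd) h
    have hhead : u.head hu = v.head hv := by
      have := (take_one_head u hu).symm.trans (htake.trans (take_one_head v hv))
      injection this
    have hlast : u.getLast hu = v.getLast hv := by
      have := (list_drop_pred u hu).symm.trans (hdrop.trans (list_drop_pred v hv))
      injection this
    have hhv : (u.head hu).val = (v.head hv).val := by rw [hhead]
    have hlv : (u.getLast hu).val = (v.getLast hv).val := by rw [hlast]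
    have i1u := words_i1 u hu
    have i1v := words_i1 v hv
    have i2u := words_i2 u hu
    have i2v := words_i2 v hv
    have i3u := words_i3 u hu
    have i3v := words_i3 v hv
    have i4u := words_i4 u hu
    have i4v := words_i4 v hv
    have hcnt : ∀ a b : Fin 2, cnt u a b = cnt v a b := by
      intro a b
      rcases fin2_cases a with ha | ha <;> rcases fin2_cases b with hb | hb <;>
        subst ha <;> subst hb <;> omega
    refine ⟨hlen, htake, hdrop, ?_⟩
    intro x hx
    match x, hx with
    | [a, b], _ =>
      rw [occ_eq_cnt a b u, occ_eq_cnt a b v]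
      exact hcnt a b

/-- numeric invariant of the factor at position i of length n -/
def Theta (n i : ℕ) : Fin 2 × Fin 2 × ℕ × ℕ := (tm i, tm (i + (n - 1)), ones i n, qe i (n - 1))

lemma psi_tmWord (m i : ℕ) :
    psi (tmWord i (m + 1)) = ([tm i], [tm (i + m)], ones i (m + 1), qe i m) := by
  unfold psi
  have h1 := tmWord_take_one i m
  have h2 : (tmWord i (m + 1)).drop ((tmWord i (m + 1)).length - 1) = [tm (i + m)] := by
    rw [list_drop_pred _ (tmWord_ne_nil i m), tmWord_getLast i m (tmWord_ne_nil i m)]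
  rw [h1, h2, tmWord_count1, tmWord_cnt_q]

lemma P_eq_ncard (m : ℕ) : P (m + 1) = (Set.range (Theta (m + 1))).ncard := by
  classical
  have hrel : ∀ u v : {w : List (Fin 2) // w.length = m + 1 ∧ IsFactor w},
      TwoAbelianEquiv u.1 v.1 ↔ psi u.1 = psi v.1 := by
    intro u v
    have hu : u.1 ≠ [] := by
      intro h
      have := u.2.1
      rw [h] at this
      simp at this
    exact equiv_iff_psi _ _ hu (u.2.1.trans v.2.1.symm)
  set r := fun u v : {w : List (Fin 2) // w.length = m + 1 ∧ IsFactor w} =>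
    TwoAbelianEquiv u.1 v.1 with hr
  let g : {w : List (Fin 2) // w.length = m + 1 ∧ IsFactor w} →
      (List (Fin 2) × List (Fin 2) × ℕ × ℕ) := fun u => psi u.1
  have e : Quot r ≃ Set.range g :=
    (Quot.congrRight (fun a b => hrel a b)).trans (Setoid.quotientKerEquivRange g)
  have hcard : P (m + 1) = Nat.card (Set.range g) := by
    unfold P
    exact Nat.card_congr e
  rw [hcard, Nat.card_coe_set_eq]
  -- identify range g with image of range Theta
  have hrange : Set.range g =
      (fun t : Fin 2 × Fin 2 × ℕ × ℕ => (([t.1] : List (Fin 2)), ([t.2.1] : List (Fin 2)), t.2.2.1, t.2.2.2)) ''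
        Set.range (Theta (m + 1)) := by
    ext t
    constructor
    · rintro ⟨⟨w, hw, i, hwi⟩, rfl⟩
      refine ⟨Theta (m + 1) i, ⟨i, rfl⟩, ?_⟩
      have hww : w = tmWord i (m + 1) := by rw [hwi, hw]
      subst hww
      show _ = psi (tmWord i (m + 1))
      rw [psi_tmWord]
      unfold Theta
      simp
    · rintro ⟨-, ⟨i, rfl⟩, rfl⟩
      refine ⟨⟨tmWord i (m + 1), tmWord_length i (m + 1), ⟨i, by rw [tmWord_length]⟩⟩, ?_⟩
      show psi (tmWord i (m + 1)) = _
      rw [psi_tmWord]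
      unfold Theta
      simp
  rw [hrange]
  apply Set.ncard_image_of_injective
  intro a b hab
  obtain ⟨a1, a2, a3, a4⟩ := a; obtain ⟨b1, b2, b3, b4⟩ := b
  simp only [Prod.mk.injEq, List.cons.injEq] at hab
  simp [hab.1.1, hab.2.1.1, hab.2.2.1, hab.2.2.2]
end Characterization
section FactorSets

/-- numeric invariant triple (first letter, last letter, pair count) at position j, length L -/
def tau (L j : ℕ) : Fin 2 × Fin 2 × ℕ := (tm j, tm (j + (L - 1)), qe j (L - 1))

def Aset (L : ℕ) : Set (Fin 2 × Fin 2 × ℕ) := Set.range (tau L)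

def Xs (L : ℕ) : Set ℕ := {p | ((0 : Fin 2), (0 : Fin 2), p) ∈ Aset L}
def Ys (L : ℕ) : Set ℕ := {p | ((0 : Fin 2), (1 : Fin 2), p) ∈ Aset L}

lemma mem_Aset' (M j : ℕ) : (tm j, tm (j + M), qe j M) ∈ Aset (M + 1) :=
  ⟨j, by simp [tau]⟩

lemma Aset_elim {M : ℕ} {h l : Fin 2} {p : ℕ} (hm : (h, l, p) ∈ Aset (M + 1)) :
    ∃ j, tm j = h ∧ tm (j + M) = l ∧ qe j M = p := by
  obtain ⟨j, hj⟩ := hm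
  simp only [tau, Nat.add_sub_cancel, Prod.mk.injEq] at hj
  exact ⟨j, hj.1, hj.2.1, hj.2.2⟩

lemma flip_window (j L : ℕ) : ∃ j', ∀ k, k ≤ L → tm (j' + k) = tm (j + k) + 1 := by
  refine ⟨j + 2 ^ (j + L), fun k hk => ?_⟩
  have h1 : j + k < 2 ^ (j + L) := lt_of_le_of_lt (by omega) (Nat.lt_two_pow_self (n := j + L))
  have := tm_flip (j + L) (j + k) h1
  rw [show j + 2 ^ (j + L) + k = j + k + 2 ^ (j + L) from by ring, this]

lemma Aset_symm_mp {L : ℕ} {h l : Fin 2} {p : ℕ} (hm : (h, l, p) ∈ Aset L) :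
    (h + 1, l + 1, p) ∈ Aset L := by
  obtain ⟨j, hj⟩ := hm
  obtain ⟨j', hj'⟩ := flip_window j L
  refine ⟨j', ?_⟩
  have hE : ∀ k, k + 1 ≤ L → Ebit (j' + k) = Ebit (j + k) := by
    intro k hk
    unfold Ebit
    rw [show j' + k + 1 = j' + (k + 1) from by ring, hj' k (by omega), hj' (k + 1) hk,
        show j + (k + 1) = j + k + 1 from by ring]
    rcases eq_or_ne (tm (j + k)) (tm (j + k + 1)) with he | he
    · rw [if_pos he, if_pos (by rw [he])]
    · rw [if_neg he, if_neg (fun hc => he (by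
        have := fin2_add_one_add_one (tm (j + k))
        have := fin2_add_one_add_one (tm (j + k + 1))
        calc tm (j+k) = tm (j+k) + 1 + 1 := (fin2_add_one_add_one _).symm
          _ = tm (j+k+1) + 1 + 1 := by rw [hc]
          _ = tm (j+k+1) := fin2_add_one_add_one _))]
  have hq : qe j' (L - 1) = qe j (L - 1) := by
    unfold qe
    apply Finset.sum_congr rfl
    intro k hk
    simp only [Finset.mem_range] at hk
    exact hE k (by omega)
  have e1 : tm j = h := congrArg Prod.fst hj
  have e2 : tm (j + (L - 1)) = l := congrArg (Prod.fst ∘ Prod.snd) hj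
  have e3 : qe j (L - 1) = p := congrArg (Prod.snd ∘ Prod.snd) hj
  unfold tau
  refine Prod.ext ?_ (Prod.ext ?_ ?_)
  · have h0 := hj' 0 (Nat.zero_le L)
    simp only [Nat.add_zero] at h0
    simp only [h0, e1]
  · have hL := hj' (L - 1) (by omega)
    simp only [hL, e2]
  · simp only [hq, e3]

lemma Aset_symm {L : ℕ} (h l : Fin 2) (p : ℕ) :
    (h, l, p) ∈ Aset L ↔ (h + 1, l + 1, p) ∈ Aset L := by
  constructor
  · exact Aset_symm_mp
  · intro hm
    have := Aset_symm_mp hm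
    rwa [fin2_add_one_add_one, fin2_add_one_add_one] at this

lemma mem11 {L p} : ((1 : Fin 2), (1 : Fin 2), p) ∈ Aset L ↔ p ∈ Xs L := by
  rw [show (1 : Fin 2) = (0 : Fin 2) + 1 from rfl]
  exact (Aset_symm 0 0 p).symm

lemma mem10 {L p} : ((1 : Fin 2), (0 : Fin 2), p) ∈ Aset L ↔ p ∈ Ys L := by
  rw [show (1 : Fin 2) = (0 : Fin 2) + 1 from rfl,
      show (0 : Fin 2) = (1 : Fin 2) + 1 from rfl]
  exact (Aset_symm 0 1 p).symm

lemma Xs_bound {L p} (h : p ∈ Xs L) : p ≤ L - 1 := by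
  obtain ⟨j, hj⟩ := h
  have : qe j (L - 1) = p := congrArg (Prod.snd ∘ Prod.snd) hj
  rw [← this]
  exact qe_le _ _

lemma Ys_bound {L p} (h : p ∈ Ys L) : p ≤ L - 1 := by
  obtain ⟨j, hj⟩ := h
  have : qe j (L - 1) = p := congrArg (Prod.snd ∘ Prod.snd) hj
  rw [← this]
  exact qe_le _ _

lemma Xs_finite (L : ℕ) : (Xs L).Finite :=
  (Set.finite_Iic (L - 1)).subset (fun _ h => Xs_bound h)

lemma Ys_finite (L : ℕ) : (Ys L).Finite :=
  (Set.finite_Iic (L - 1)).subset (fun _ h => Ys_bound h)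

end FactorSets
section Recursions

lemma fin2_one_one : (1 : Fin 2) + 1 = 0 := rfl

lemma tau_oe (M j : ℕ) : tau (2*M+1) (2*j) = (tm j, tm (j + M), M - qe j M) := by
  have hq := qB M j
  unfold tau
  rw [Nat.add_sub_cancel, show 2*j + 2*M = 2*(j+M) from by ring, tm_even, tm_even]
  refine Prod.ext rfl (Prod.ext rfl ?_)
  simp only
  omega

lemma tau_oo (M j : ℕ) : tau (2*M+1) (2*j+1) = (tm j + 1, tm (j + M) + 1, M - qe j M) := by
  have hq := qC M j
  unfold tau
  rw [Nat.add_sub_cancel, show 2*j+1 + 2*M = 2*(j+M)+1 from by ring, tm_odd, tm_odd]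
  refine Prod.ext rfl (Prod.ext rfl ?_)
  simp only
  omega

lemma tau_ee (M j : ℕ) : tau (2*M+2) (2*j) = (tm j, tm (j + M) + 1, M - qe j M) := by
  have hq := qA M j
  unfold tau
  rw [show 2*M+2-1 = 2*M+1 from by omega, show 2*j + (2*M+1) = 2*(j+M)+1 from by ring,
      tm_even, tm_odd]
  refine Prod.ext rfl (Prod.ext rfl ?_)
  simp only
  omega

lemma tau_eo (M j : ℕ) : tau (2*M+2) (2*j+1) = (tm j + 1, tm (j + M + 1), M + 1 - qe j (M+1)) := by
  have hq := qD M j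
  unfold tau
  rw [show 2*M+2-1 = 2*M+1 from by omega, show 2*j+1 + (2*M+1) = 2*(j+M+1) from by ring,
      tm_odd, tm_even]
  refine Prod.ext rfl (Prod.ext rfl ?_)
  simp only
  omega

lemma fin2_succ_eq_zero {a : Fin 2} (h : a + 1 = 0) : a = 1 := by
  rcases fin2_cases a with h' | h' <;> simp [h'] at h ⊢

lemma fin2_succ_eq_one {a : Fin 2} (h : a + 1 = 1) : a = 0 := by
  rcases fin2_cases a with h' | h' <;> simp [h'] at h ⊢

lemma Xs_odd (M : ℕ) : Xs (2*M+1) = {pp | ∃ p ∈ Xs (M+1), pp + p = M} := by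
  ext pp
  constructor
  · rintro ⟨i, hi⟩
    rcases Nat.even_or_odd i with ⟨j, hj⟩ | ⟨j, hj⟩
    · rw [show i = 2*j from by omega, tau_oe] at hi
      simp only [Prod.mk.injEq] at hi
      refine ⟨qe j M, ?_, ?_⟩
      · have hm := mem_Aset' M j
        rw [hi.1, hi.2.1] at hm
        exact hm
      · have := qe_le j M; omega
    · rw [hj, tau_oo] at hi
      simp only [Prod.mk.injEq] at hi
      have h1 : tm j = 1 := fin2_succ_eq_zero hi.1
      have h2 : tm (j + M) = 1 := fin2_succ_eq_zero hi.2.1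
      refine ⟨qe j M, ?_, ?_⟩
      · have hm := mem_Aset' M j
        rw [h1, h2] at hm
        exact mem11.mp hm
      · have := qe_le j M; omega
  · rintro ⟨p, hp, hs⟩
    obtain ⟨j, h1, h2, h3⟩ := Aset_elim hp
    refine ⟨2*j, ?_⟩
    rw [tau_oe, h1, h2, h3]
    have := qe_le j M
    refine Prod.ext rfl (Prod.ext rfl ?_)
    simp only
    omega

lemma Ys_odd (M : ℕ) : Ys (2*M+1) = {pp | ∃ p ∈ Ys (M+1), pp + p = M} := by
  ext pp
  constructor
  · rintro ⟨i, hi⟩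
    rcases Nat.even_or_odd i with ⟨j, hj⟩ | ⟨j, hj⟩
    · rw [show i = 2*j from by omega, tau_oe] at hi
      simp only [Prod.mk.injEq] at hi
      refine ⟨qe j M, ?_, ?_⟩
      · have hm := mem_Aset' M j
        rw [hi.1, hi.2.1] at hm
        exact hm
      · have := qe_le j M; omega
    · rw [hj, tau_oo] at hi
      simp only [Prod.mk.injEq] at hi
      have h1 : tm j = 1 := fin2_succ_eq_zero hi.1
      have h2 : tm (j + M) = 0 := fin2_succ_eq_one hi.2.1
      refine ⟨qe j M, ?_, ?_⟩
      · have hm := mem_Aset' M j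
        rw [h1, h2] at hm
        exact mem10.mp hm
      · have := qe_le j M; omega
  · rintro ⟨p, hp, hs⟩
    obtain ⟨j, h1, h2, h3⟩ := Aset_elim hp
    refine ⟨2*j, ?_⟩
    rw [tau_oe, h1, h2, h3]
    have := qe_le j M
    refine Prod.ext rfl (Prod.ext rfl ?_)
    simp only
    omega

lemma Xs_even (M : ℕ) :
    Xs (2*M+2) = {pp | ∃ p ∈ Ys (M+1), pp + p = M} ∪ {pp | ∃ p ∈ Ys (M+2), pp + p = M+1} := by
  ext pp
  constructor
  · rintro ⟨i, hi⟩
    rcases Nat.even_or_odd i with ⟨j, hj⟩ | ⟨j, hj⟩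
    · rw [show i = 2*j from by omega, tau_ee] at hi
      simp only [Prod.mk.injEq] at hi
      have h2 : tm (j + M) = 1 := fin2_succ_eq_zero hi.2.1
      refine Or.inl ⟨qe j M, ?_, ?_⟩
      · have hm := mem_Aset' M j
        rw [hi.1, h2] at hm
        exact hm
      · have := qe_le j M; omega
    · rw [hj, tau_eo] at hi
      simp only [Prod.mk.injEq] at hi
      have h1 : tm j = 1 := fin2_succ_eq_zero hi.1
      refine Or.inr ⟨qe j (M+1), ?_, ?_⟩
      · have hm := mem_Aset' (M+1) j
        rw [show j + (M+1) = j + M + 1 from by ring, h1, hi.2.1] at hm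
        exact mem10.mp hm
      · have := qe_le j (M+1); omega
  · rintro (⟨p, hp, hs⟩ | ⟨p, hp, hs⟩)
    · obtain ⟨j, h1, h2, h3⟩ := Aset_elim hp
      refine ⟨2*j, ?_⟩
      rw [tau_ee, h1, h2, h3, fin2_one_one]
      have := qe_le j M
      refine Prod.ext rfl (Prod.ext rfl ?_)
      simp only
      omega
    · have hp' := mem10.mpr hp
      obtain ⟨j, h1, h2, h3⟩ := Aset_elim hp'
      refine ⟨2*j+1, ?_⟩
      rw [tau_eo, h1, fin2_one_one, show j + (M+1) = j + M + 1 from by ring] at *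
      rw [h2, h3]
      have := qe_le j (M+1)
      refine Prod.ext rfl (Prod.ext rfl ?_)
      simp only
      omega

lemma Ys_even (M : ℕ) :
    Ys (2*M+2) = {pp | ∃ p ∈ Xs (M+1), pp + p = M} ∪ {pp | ∃ p ∈ Xs (M+2), pp + p = M+1} := by
  ext pp
  constructor
  · rintro ⟨i, hi⟩
    rcases Nat.even_or_odd i with ⟨j, hj⟩ | ⟨j, hj⟩
    · rw [show i = 2*j from by omega, tau_ee] at hi
      simp only [Prod.mk.injEq] at hi
      have h2 : tm (j + M) = 0 := fin2_succ_eq_one hi.2.1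
      refine Or.inl ⟨qe j M, ?_, ?_⟩
      · have hm := mem_Aset' M j
        rw [hi.1, h2] at hm
        exact hm
      · have := qe_le j M; omega
    · rw [hj, tau_eo] at hi
      simp only [Prod.mk.injEq] at hi
      have h1 : tm j = 1 := fin2_succ_eq_zero hi.1
      refine Or.inr ⟨qe j (M+1), ?_, ?_⟩
      · have hm := mem_Aset' (M+1) j
        rw [show j + (M+1) = j + M + 1 from by ring, h1, hi.2.1] at hm
        exact mem11.mp hm
      · have := qe_le j (M+1); omega
  · rintro (⟨p, hp, hs⟩ | ⟨p, hp, hs⟩)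
    · obtain ⟨j, h1, h2, h3⟩ := Aset_elim hp
      refine ⟨2*j, ?_⟩
      rw [tau_ee, h1, h2, h3]
      have := qe_le j M
      refine Prod.ext rfl (Prod.ext rfl ?_)
      simp only
      omega
    · have hp' := mem11.mpr hp
      obtain ⟨j, h1, h2, h3⟩ := Aset_elim hp'
      refine ⟨2*j+1, ?_⟩
      rw [tau_eo, h1, fin2_one_one, show j + (M+1) = j + M + 1 from by ring] at *
      rw [h2, h3]
      have := qe_le j (M+1)
      refine Prod.ext rfl (Prod.ext rfl ?_)
      simp only
      omega

lemma Aset_parity {M : ℕ} {h l : Fin 2} {p : ℕ} (hm : (h, l, p) ∈ Aset (M+1)) :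
    (p + M + h.val + l.val) % 2 = 0 := by
  obtain ⟨j, h1, h2, h3⟩ := Aset_elim hm
  have hu : tmWord j (M+1) ≠ [] := tmWord_ne_nil j M
  have i1 := words_i1 (tmWord j (M+1)) hu
  have i2 := words_i2 (tmWord j (M+1)) hu
  have hq := tmWord_cnt_q M j
  rw [tmWord_length] at i1
  rw [tmWord_head, tmWord_getLast] at i2
  rw [h3] at hq
  have hhv : (tm j).val = h.val := by rw [h1]
  have hlv : (tm (j + M)).val = l.val := by rw [h2]
  rw [hhv] at i2
  rw [hlv] at i2
  omega

lemma ivt_up (f : ℕ → ℕ) (hf : ∀ k, f (k+1) ≤ f k + 1 ∧ f k ≤ f (k+1) + 1) :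
    ∀ d a c, f a ≤ c → c ≤ f (a + d) → ∃ k, f k = c := by
  intro d
  induction d with
  | zero =>
    intro a c h1 h2
    simp only [Nat.add_zero] at h2
    exact ⟨a, by omega⟩
  | succ d ih =>
    intro a c h1 h2
    by_cases hc : f (a+1) ≤ c
    · exact ih (a+1) c hc (by rw [show a+1+d = a+(d+1) from by ring]; exact h2)
    · have := (hf a).1
      exact ⟨a, by omega⟩

lemma ivt_down (f : ℕ → ℕ) (hf : ∀ k, f (k+1) ≤ f k + 1 ∧ f k ≤ f (k+1) + 1) :
    ∀ d a c, c ≤ f a → f (a + d) ≤ c → ∃ k, f k = c := by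
  intro d
  induction d with
  | zero =>
    intro a c h1 h2
    simp only [Nat.add_zero] at h2
    exact ⟨a, by omega⟩
  | succ d ih =>
    intro a c h1 h2
    by_cases hc : c ≤ f (a+1)
    · exact ih (a+1) c hc (by rw [show a+1+d = a+(d+1) from by ring]; exact h2)
    · have := (hf a).2
      exact ⟨a, by omega⟩

lemma ivt (f : ℕ → ℕ) (hf : ∀ k, f (k+1) ≤ f k + 1 ∧ f k ≤ f (k+1) + 1)
    (a b c : ℕ) (h1 : f a ≤ c) (h2 : c ≤ f b) : ∃ k, f k = c := by
  rcases le_total a b with h | h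
  · exact ivt_up f hf (b - a) a c h1 (by rw [show a + (b-a) = b from by omega]; exact h2)
  · exact ivt_down f hf (a - b) b c h2 (by rw [show b + (a-b) = a from by omega]; exact h1)

lemma keyii (n v : ℕ) (hv : v ∈ Xs (2*n+2)) (hv1 : v + 1 ∈ Ys (2*n+2)) : v ∈ Ys (2*n+1) := by
  have hv' : ((0:Fin 2), (0:Fin 2), v) ∈ Aset (2*n+1+1) := by
    rw [show 2*n+1+1 = 2*n+2 from rfl]; exact hv
  have hv1' : ((0:Fin 2), (1:Fin 2), v+1) ∈ Aset (2*n+1+1) := by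
    rw [show 2*n+1+1 = 2*n+2 from rfl]; exact hv1
  obtain ⟨i, _, _, hi3⟩ := Aset_elim hv'
  obtain ⟨i', _, _, hi3'⟩ := Aset_elim hv1'
  have hf : ∀ k, qe (k+1) (2*n) ≤ qe k (2*n) + 1 ∧ qe k (2*n) ≤ qe (k+1) (2*n) + 1 := by
    intro k
    have := qe_step k (2*n)
    have := Ebit_le k
    have := Ebit_le (k + 2*n)
    omega
  have hle : qe i (2*n) ≤ v := by
    have := qe_succ i (2*n)
    have := Ebit_le (i + 2*n)
    omega
  have hge : v ≤ qe i' (2*n) := by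
    have := qe_succ i' (2*n)
    have := Ebit_le (i' + 2*n)
    omega
  obtain ⟨k, hk⟩ := ivt (fun k => qe k (2*n)) hf i i' v hle hge
  have hmem : (tm k, tm (k + 2*n), v) ∈ Aset (2*n+1) := by
    rw [← hk]
    exact mem_Aset' (2*n) k
  have hpar0 : (v + (2*n+1) + 0 + 0) % 2 = 0 := by
    have := Aset_parity hv'
    simpa using this
  have hpar1 : (v + 2*n + (tm k).val + (tm (k+2*n)).val) % 2 = 0 := by
    have := Aset_parity (M := 2*n) hmem
    exact this
  have hval : (tm k).val + (tm (k+2*n)).val = 1 := by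
    have := (tm k).isLt
    have := (tm (k+2*n)).isLt
    omega
  rcases fin2_cases (tm k) with h1 | h1 <;> rcases fin2_cases (tm (k+2*n)) with h2 | h2
  · rw [h1, h2] at hval; simp at hval
  · rw [h1, h2] at hmem; exact hmem
  · rw [h1, h2] at hmem; exact mem10.mp hmem
  · rw [h1, h2] at hval; simp at hval

lemma keyi (n : ℕ) : Ys (2*n+1) ⊆ Xs (2*n+2) := by
  intro p hp
  rw [Ys_odd] at hp
  rw [show 2*n+2 = 2*n+2 from rfl, Xs_even]
  exact Or.inl hp

end Recursions
section Counting

lemma fin2_val_le (a : Fin 2) : a.val ≤ 1 := by omega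

lemma fin2_val_inj {a b : Fin 2} (h : a.val = b.val) : a = b := Fin.ext h

lemma fin2_add_right_cancel {a b : Fin 2} (h : a + 1 = b + 1) : a = b := by
  have h2 : a + 1 + 1 = b + 1 + 1 := by rw [h]
  rwa [fin2_add_one_add_one, fin2_add_one_add_one] at h2

lemma Aset_bound {L : ℕ} {t : Fin 2 × Fin 2 × ℕ} (hm : t ∈ Aset L) : t.2.2 ≤ L - 1 := by
  obtain ⟨j, rfl⟩ := hm
  exact qe_le j (L - 1)

lemma Aset_bound' {M : ℕ} {h l : Fin 2} {p : ℕ} (hm : (h, l, p) ∈ Aset (M + 1)) : p ≤ M := by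
  have := Aset_bound hm
  simpa using this

lemma Aset_finite (L : ℕ) : (Aset L).Finite := by
  apply ((Set.finite_univ (α := Fin 2)).prod
    ((Set.finite_univ (α := Fin 2)).prod (Set.finite_Iic (L - 1)))).subset
  intro t ht
  exact ⟨trivial, trivial, Aset_bound ht⟩

def i00 (p : ℕ) : Fin 2 × Fin 2 × ℕ := ((0 : Fin 2), (0 : Fin 2), p)
def i11 (p : ℕ) : Fin 2 × Fin 2 × ℕ := ((1 : Fin 2), (1 : Fin 2), p)
def i01 (p : ℕ) : Fin 2 × Fin 2 × ℕ := ((0 : Fin 2), (1 : Fin 2), p)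
def i10 (p : ℕ) : Fin 2 × Fin 2 × ℕ := ((1 : Fin 2), (0 : Fin 2), p)

lemma i00_inj : Function.Injective i00 := by intro a b h; simpa [i00, Prod.ext_iff] using h
lemma i11_inj : Function.Injective i11 := by intro a b h; simpa [i11, Prod.ext_iff] using h
lemma i01_inj : Function.Injective i01 := by intro a b h; simpa [i01, Prod.ext_iff] using h
lemma i10_inj : Function.Injective i10 := by intro a b h; simpa [i10, Prod.ext_iff] using h

lemma Aset_decomp (L : ℕ) :
    Aset L = ((i00 '' Xs L ∪ i11 '' Xs L) ∪ i01 '' Ys L) ∪ i10 '' Ys L := by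
  ext t
  obtain ⟨h, l, p⟩ := t
  constructor
  · intro hm
    rcases fin2_cases h with h0 | h0 <;> rcases fin2_cases l with l0 | l0 <;> subst h0 <;> subst l0
    · exact Or.inl (Or.inl (Or.inl ⟨p, hm, rfl⟩))
    · exact Or.inl (Or.inr ⟨p, hm, rfl⟩)
    · exact Or.inr ⟨p, mem10.mp hm, rfl⟩
    · exact Or.inl (Or.inl (Or.inr ⟨p, mem11.mp hm, rfl⟩))
  · rintro (((⟨p', hp, he⟩ | ⟨p', hp, he⟩) | ⟨p', hp, he⟩) | ⟨p', hp, he⟩)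
    · rw [← he]; exact hp
    · rw [← he]; exact mem11.mpr hp
    · rw [← he]; exact hp
    · rw [← he]; exact mem10.mpr hp

lemma ncard_Aset (L : ℕ) :
    (Aset L).ncard = 2 * (Xs L).ncard + 2 * (Ys L).ncard := by
  have fX := Xs_finite L
  have fY := Ys_finite L
  have f1 : (i00 '' Xs L).Finite := fX.image _
  have f2 : (i11 '' Xs L).Finite := fX.image _
  have f3 : (i01 '' Ys L).Finite := fY.image _
  have f4 : (i10 '' Ys L).Finite := fY.image _
  have d12 : Disjoint (i00 '' Xs L) (i11 '' Xs L) := by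
    rw [Set.disjoint_left]
    rintro t ⟨p, _, rfl⟩ ⟨p', _, he⟩
    simp [i00, i11, Prod.ext_iff] at he
  have d3 : Disjoint (i00 '' Xs L ∪ i11 '' Xs L) (i01 '' Ys L) := by
    rw [Set.disjoint_left]
    rintro t (⟨p, _, rfl⟩ | ⟨p, _, rfl⟩) ⟨p', _, he⟩ <;>
      simp [i00, i11, i01, Prod.ext_iff] at he
  have d4 : Disjoint ((i00 '' Xs L ∪ i11 '' Xs L) ∪ i01 '' Ys L) (i10 '' Ys L) := by
    rw [Set.disjoint_left]
    rintro t ((⟨p, _, rfl⟩ | ⟨p, _, rfl⟩) | ⟨p, _, rfl⟩) ⟨p', _, he⟩ <;>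
      simp [i00, i11, i01, i10, Prod.ext_iff] at he
  rw [Aset_decomp L, Set.ncard_union_eq d4 ((f1.union f2).union f3) f4,
      Set.ncard_union_eq d3 (f1.union f2) f3, Set.ncard_union_eq d12 f1 f2,
      Set.ncard_image_of_injective _ i00_inj, Set.ncard_image_of_injective _ i11_inj,
      Set.ncard_image_of_injective _ i01_inj, Set.ncard_image_of_injective _ i10_inj]
  ring

/-- diagonal part of Aset -/
def Dg (L : ℕ) : Set (Fin 2 × Fin 2 × ℕ) := {t | t ∈ Aset L ∧ t.1 = t.2.1}

lemma Dg_decomp (L : ℕ) : Dg L = i00 '' Xs L ∪ i11 '' Xs L := by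
  ext t
  obtain ⟨h, l, p⟩ := t
  constructor
  · rintro ⟨hm, hd⟩
    simp only at hd
    subst hd
    rcases fin2_cases h with h0 | h0 <;> subst h0
    · exact Or.inl ⟨p, hm, rfl⟩
    · exact Or.inr ⟨p, mem11.mp hm, rfl⟩
  · rintro (⟨p', hp, he⟩ | ⟨p', hp, he⟩)
    · rw [← he]; exact ⟨hp, rfl⟩
    · rw [← he]; exact ⟨mem11.mpr hp, rfl⟩

lemma ncard_Dg (L : ℕ) : (Dg L).ncard = 2 * (Xs L).ncard := by
  have fX := Xs_finite L
  have d12 : Disjoint (i00 '' Xs L) (i11 '' Xs L) := by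
    rw [Set.disjoint_left]
    rintro t ⟨p, _, rfl⟩ ⟨p', _, he⟩
    simp [i00, i11, Prod.ext_iff] at he
  rw [Dg_decomp, Set.ncard_union_eq d12 (fX.image _) (fX.image _),
      Set.ncard_image_of_injective _ i00_inj, Set.ncard_image_of_injective _ i11_inj]
  ring

/-- the key sets: pair counts p with p in X(M+1) and p+1 in X(M+2) -/
def KS (M : ℕ) : Set ℕ := {p | p ∈ Xs (M + 1) ∧ p + 1 ∈ Xs (M + 2)}

lemma KS_finite (M : ℕ) : (KS M).Finite := (Xs_finite (M + 1)).subset (fun _ h => h.1)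

/-- diagonal part with shifted diagonal condition -/
def DgK (M : ℕ) : Set (Fin 2 × Fin 2 × ℕ) :=
  {t | t ∈ Aset (M + 1) ∧ t.1 = t.2.1 ∧ (t.1 + 1, t.1 + 1, t.2.2 + 1) ∈ Aset (M + 2)}

lemma DgK_decomp (M : ℕ) : DgK M = i00 '' KS M ∪ i11 '' KS M := by
  ext t
  obtain ⟨h, l, p⟩ := t
  constructor
  · rintro ⟨hm, hd, hk⟩
    simp only at hd hk
    subst hd
    rcases fin2_cases h with h0 | h0 <;> subst h0
    · refine Or.inl ⟨p, ⟨hm, ?_⟩, rfl⟩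
      exact mem11.mp hk
    · refine Or.inr ⟨p, ⟨mem11.mp hm, ?_⟩, rfl⟩
      rw [fin2_one_one] at hk
      exact hk
  · rintro (⟨p', ⟨hp1, hp2⟩, he⟩ | ⟨p', ⟨hp1, hp2⟩, he⟩)
    · rw [← he]
      exact ⟨hp1, rfl, mem11.mpr hp2⟩
    · rw [← he]
      refine ⟨mem11.mpr hp1, rfl, ?_⟩
      show ((1:Fin 2) + 1, (1:Fin 2) + 1, p' + 1) ∈ Aset (M + 2)
      rw [fin2_one_one]
      exact hp2

lemma ncard_DgK (M : ℕ) : (DgK M).ncard = 2 * (KS M).ncard := by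
  have fK := KS_finite M
  have d12 : Disjoint (i00 '' KS M) (i11 '' KS M) := by
    rw [Set.disjoint_left]
    rintro t ⟨p, _, rfl⟩ ⟨p', _, he⟩
    simp [i00, i11, Prod.ext_iff] at he
  rw [DgK_decomp, Set.ncard_union_eq d12 (fK.image _) (fK.image _),
      Set.ncard_image_of_injective _ i00_inj, Set.ncard_image_of_injective _ i11_inj]
  ring

/-- branch maps -/
def o0 (M : ℕ) (t : Fin 2 × Fin 2 × ℕ) : Fin 2 × Fin 2 × ℕ × ℕ :=
  (t.1, t.2.1, M + t.2.1.val, M - t.2.2)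
def o1 (M : ℕ) (t : Fin 2 × Fin 2 × ℕ) : Fin 2 × Fin 2 × ℕ × ℕ :=
  (t.1 + 1, t.2.1 + 1, M + 1 - t.1.val, M - t.2.2)
def e0 (M : ℕ) (t : Fin 2 × Fin 2 × ℕ) : Fin 2 × Fin 2 × ℕ × ℕ :=
  (t.1, t.2.1 + 1, M + 1, M - t.2.2)
def e1 (M : ℕ) (t : Fin 2 × Fin 2 × ℕ) : Fin 2 × Fin 2 × ℕ × ℕ :=
  (t.1 + 1, t.2.1, M + 1 + t.2.1.val - t.1.val, M + 1 - t.2.2)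

lemma Theta_oe (M j : ℕ) : Theta (2*M+1) (2*j) = o0 M (tau (M+1) j) := by
  unfold Theta o0 tau
  simp only [Nat.add_sub_cancel]
  refine Prod.ext (tm_even j) (Prod.ext ?_ (Prod.ext ?_ ?_)) <;> simp only
  · rw [show 2*j + 2*M = 2*(j+M) from by ring, tm_even]
  · exact onesB M j
  · have := qB M j; omega

lemma Theta_oo (M j : ℕ) : Theta (2*M+1) (2*j+1) = o1 M (tau (M+1) j) := by
  unfold Theta o1 tau
  simp only [Nat.add_sub_cancel]
  refine Prod.ext (tm_odd j) (Prod.ext ?_ (Prod.ext ?_ ?_)) <;> simp only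
  · rw [show 2*j+1 + 2*M = 2*(j+M)+1 from by ring, tm_odd]
  · have := onesC M j
    have := fin2_val_le (tm j)
    omega
  · have := qC M j; omega

lemma Theta_ee (M j : ℕ) : Theta (2*M+2) (2*j) = e0 M (tau (M+1) j) := by
  unfold Theta e0 tau
  simp only [Nat.add_sub_cancel]
  rw [show 2*M+2-1 = 2*M+1 from by omega]
  refine Prod.ext (tm_even j) (Prod.ext ?_ (Prod.ext ?_ ?_)) <;> simp only
  · rw [show 2*j + (2*M+1) = 2*(j+M)+1 from by ring, tm_odd]
  · have := onesA (M+1) j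
    rw [show 2*(M+1) = 2*M+2 from by ring] at this
    exact this
  · have := qA M j; omega

lemma Theta_eo (M j : ℕ) : Theta (2*M+2) (2*j+1) = e1 M (tau (M+2) j) := by
  unfold Theta e1 tau
  rw [show M+2-1 = M+1 from by omega, show 2*M+2-1 = 2*M+1 from by omega]
  refine Prod.ext (tm_odd j) (Prod.ext ?_ (Prod.ext ?_ ?_)) <;> simp only
  · rw [show 2*j+1 + (2*M+1) = 2*(j+M+1) from by ring, tm_even,
        show j + (M+1) = j+M+1 from by ring]
  · have := onesD (M+1) j
    rw [show 2*(M+1) = 2*M+2 from by ring, show j + (M+1) = j+M+1 from by ring] at this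
    have := fin2_val_le (tm j)
    have := fin2_val_le (tm (j+M+1))
    rw [show j + (M+1) = j+M+1 from by ring]
    omega
  · have := qD M j; omega

lemma range_Theta_odd (M : ℕ) :
    Set.range (Theta (2*M+1)) = o0 M '' Aset (M+1) ∪ o1 M '' Aset (M+1) := by
  ext t
  constructor
  · rintro ⟨i, rfl⟩
    rcases Nat.even_or_odd i with ⟨j, hj⟩ | ⟨j, hj⟩
    · exact Or.inl ⟨tau (M+1) j, ⟨j, rfl⟩,
        by rw [show i = 2*j from by omega]; exact (Theta_oe M j).symm⟩
    · exact Or.inr ⟨tau (M+1) j, ⟨j, rfl⟩,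
        by rw [hj]; exact (Theta_oo M j).symm⟩
  · rintro (⟨t', ⟨j, rfl⟩, rfl⟩ | ⟨t', ⟨j, rfl⟩, rfl⟩)
    · exact ⟨2*j, Theta_oe M j⟩
    · exact ⟨2*j+1, Theta_oo M j⟩

lemma range_Theta_even (M : ℕ) :
    Set.range (Theta (2*M+2)) = e0 M '' Aset (M+1) ∪ e1 M '' Aset (M+2) := by
  ext t
  constructor
  · rintro ⟨i, rfl⟩
    rcases Nat.even_or_odd i with ⟨j, hj⟩ | ⟨j, hj⟩
    · exact Or.inl ⟨tau (M+1) j, ⟨j, rfl⟩,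
        by rw [show i = 2*j from by omega]; exact (Theta_ee M j).symm⟩
    · exact Or.inr ⟨tau (M+2) j, ⟨j, rfl⟩,
        by rw [hj]; exact (Theta_eo M j).symm⟩
  · rintro (⟨t', ⟨j, rfl⟩, rfl⟩ | ⟨t', ⟨j, rfl⟩, rfl⟩)
    · exact ⟨2*j, Theta_ee M j⟩
    · exact ⟨2*j+1, Theta_eo M j⟩

lemma o0_injOn (M : ℕ) : Set.InjOn (o0 M) (Aset (M+1)) := by
  rintro ⟨h, l, p⟩ hm ⟨h', l', p'⟩ hm' he
  have b1 := Aset_bound' hm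
  have b2 := Aset_bound' hm'
  simp only [o0, Prod.mk.injEq] at he
  obtain ⟨e1, e2, _, e4⟩ := he
  refine Prod.ext e1 (Prod.ext e2 ?_)
  simp only
  omega

lemma o1_injOn (M : ℕ) : Set.InjOn (o1 M) (Aset (M+1)) := by
  rintro ⟨h, l, p⟩ hm ⟨h', l', p'⟩ hm' he
  have b1 := Aset_bound' hm
  have b2 := Aset_bound' hm'
  simp only [o1, Prod.mk.injEq] at he
  obtain ⟨e1, e2, _, e4⟩ := he
  refine Prod.ext (fin2_add_right_cancel e1) (Prod.ext (fin2_add_right_cancel e2) ?_)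
  simp only
  omega

lemma e0_injOn (M : ℕ) : Set.InjOn (e0 M) (Aset (M+1)) := by
  rintro ⟨h, l, p⟩ hm ⟨h', l', p'⟩ hm' he
  have b1 := Aset_bound' hm
  have b2 := Aset_bound' hm'
  simp only [e0, Prod.mk.injEq] at he
  obtain ⟨e1, e2, _, e4⟩ := he
  refine Prod.ext e1 (Prod.ext (fin2_add_right_cancel e2) ?_)
  simp only
  omega

lemma e1_injOn (M : ℕ) : Set.InjOn (e1 M) (Aset (M+2)) := by
  rintro ⟨h, l, p⟩ hm ⟨h', l', p'⟩ hm' he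
  have b1 : p ≤ M + 1 := by have := Aset_bound hm; simpa using this
  have b2 : p' ≤ M + 1 := by have := Aset_bound hm'; simpa using this
  simp only [e1, Prod.mk.injEq] at he
  obtain ⟨e1', e2, _, e4⟩ := he
  refine Prod.ext (fin2_add_right_cancel e1') (Prod.ext e2 ?_)
  simp only
  omega

lemma inter_odd (M : ℕ) :
    (o0 M '' Aset (M+1)) ∩ (o1 M '' Aset (M+1)) = o0 M '' Dg (M+1) := by
  ext t
  constructor
  · rintro ⟨⟨⟨h, l, p⟩, hm, rfl⟩, ⟨⟨h', l', p'⟩, hm', he⟩⟩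
    simp only [o0, o1, Prod.mk.injEq] at he
    obtain ⟨e1, e2, e3, e4⟩ := he
    have hv1 := fin2_val_add_one h'
    have hv2 := fin2_val_le h'
    have hv3 := fin2_val_le l
    have hld : l = h := by
      apply fin2_val_inj
      rw [← e1]
      omega
    exact ⟨(h, l, p), ⟨hm, by simp [hld]⟩, rfl⟩
  · rintro ⟨⟨h, l, p⟩, ⟨hm, hd⟩, rfl⟩
    simp only at hd
    subst hd
    refine ⟨⟨(h, h, p), hm, rfl⟩, ⟨(h+1, h+1, p), Aset_symm_mp hm, ?_⟩⟩
    have hv1 := fin2_val_add_one h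
    have hv2 := fin2_val_le h
    unfold o0 o1
    refine Prod.ext ?_ (Prod.ext ?_ (Prod.ext ?_ ?_)) <;> simp only <;>
      first
      | exact fin2_add_one_add_one h
      | omega

lemma inter_even (M : ℕ) :
    (e0 M '' Aset (M+1)) ∩ (e1 M '' Aset (M+2)) = e0 M '' DgK M := by
  ext t
  constructor
  · rintro ⟨⟨⟨h, l, p⟩, hm, rfl⟩, ⟨⟨h', l', p'⟩, hm', he⟩⟩
    simp only [e0, e1, Prod.mk.injEq] at he
    obtain ⟨e1', e2, e3, e4⟩ := he
    have b1 := Aset_bound' hm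
    have b2 : p' ≤ M + 1 := by have := Aset_bound hm'; simpa using this
    have hv1 := fin2_val_le h'
    have hv2 := fin2_val_le l'
    have hl'h' : l' = h' := by
      apply fin2_val_inj
      omega
    have hp' : p' = p + 1 := by omega
    have hlh : h = l := by
      rw [← e1', ← hl'h', e2]
      exact fin2_add_one_add_one l
    refine ⟨(h, l, p), ⟨hm, hlh, ?_⟩, rfl⟩
    simp only
    have hh' : h' = h + 1 := by rw [← e1', fin2_add_one_add_one]
    have : (h + 1, h + 1, p + 1) = (h', l', p') := by
      rw [hl'h', hh', hp']
    rw [this]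
    exact hm'
  · rintro ⟨⟨h, l, p⟩, ⟨hm, hd, hk⟩, rfl⟩
    simp only at hd hk
    subst hd
    refine ⟨⟨(h, h, p), hm, rfl⟩, ⟨(h+1, h+1, p+1), hk, ?_⟩⟩
    have b1 := Aset_bound' hm
    have hv1 := fin2_val_add_one h
    have hv2 := fin2_val_le h
    unfold e0 e1
    refine Prod.ext ?_ (Prod.ext ?_ (Prod.ext ?_ ?_)) <;> simp only <;>
      first
      | exact fin2_add_one_add_one h
      | omega

lemma P_odd_formula (M : ℕ) :
    P (2*M+1) + 2 * (Xs (M+1)).ncard = 4 * (Xs (M+1)).ncard + 4 * (Ys (M+1)).ncard := by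
  have hP : P (2*M+1) = (Set.range (Theta (2*M+1))).ncard := P_eq_ncard (2*M)
  have fA := Aset_finite (M+1)
  have f0 : (o0 M '' Aset (M+1)).Finite := fA.image _
  have f1 : (o1 M '' Aset (M+1)).Finite := fA.image _
  have hunion := Set.ncard_union_add_ncard_inter (o0 M '' Aset (M+1)) (o1 M '' Aset (M+1)) f0 f1
  rw [inter_odd M] at hunion
  have hc0 : (o0 M '' Aset (M+1)).ncard = (Aset (M+1)).ncard :=
    Set.ncard_image_of_injOn (o0_injOn M)
  have hc1 : (o1 M '' Aset (M+1)).ncard = (Aset (M+1)).ncard :=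
    Set.ncard_image_of_injOn (o1_injOn M)
  have hcd : (o0 M '' Dg (M+1)).ncard = (Dg (M+1)).ncard :=
    Set.ncard_image_of_injOn ((o0_injOn M).mono (fun t ht => ht.1))
  rw [hP, range_Theta_odd M]
  rw [hc0, hc1, hcd, ncard_Dg, ncard_Aset] at hunion
  omega

lemma P_even_formula (M : ℕ) :
    P (2*M+2) + 2 * (KS M).ncard =
      2 * (Xs (M+1)).ncard + 2 * (Ys (M+1)).ncard +
      2 * (Xs (M+2)).ncard + 2 * (Ys (M+2)).ncard := by
  have hP : P (2*M+2) = (Set.range (Theta (2*M+2))).ncard := by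
    have := P_eq_ncard (2*M+1)
    rw [show 2*M+1+1 = 2*M+2 from rfl] at this
    exact this
  have fA1 := Aset_finite (M+1)
  have fA2 := Aset_finite (M+2)
  have f0 : (e0 M '' Aset (M+1)).Finite := fA1.image _
  have f1 : (e1 M '' Aset (M+2)).Finite := fA2.image _
  have hunion := Set.ncard_union_add_ncard_inter (e0 M '' Aset (M+1)) (e1 M '' Aset (M+2)) f0 f1
  rw [inter_even M] at hunion
  have hc0 : (e0 M '' Aset (M+1)).ncard = (Aset (M+1)).ncard :=
    Set.ncard_image_of_injOn (e0_injOn M)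
  have hc1 : (e1 M '' Aset (M+2)).ncard = (Aset (M+2)).ncard :=
    Set.ncard_image_of_injOn (e1_injOn M)
  have hcd : (e0 M '' DgK M).ncard = (DgK M).ncard :=
    Set.ncard_image_of_injOn ((e0_injOn M).mono (fun t ht => ht.1))
  rw [hP, range_Theta_even M]
  rw [hc0, hc1, hcd, ncard_DgK, ncard_Aset, ncard_Aset] at hunion
  omega

end Counting
section Final

def reflS (c : ℕ) (S : Set ℕ) : Set ℕ := {pp | ∃ p ∈ S, pp + p = c}

lemma reflS_finite (c : ℕ) (S : Set ℕ) : (reflS c S).Finite := by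
  apply (Set.finite_Iic c).subset
  rintro pp ⟨p, _, he⟩
  simp only [Set.mem_Iic]
  omega

lemma reflS_ncard (c : ℕ) (S : Set ℕ) (hb : ∀ p ∈ S, p ≤ c) (hf : S.Finite) :
    (reflS c S).ncard = S.ncard := by
  have himg : reflS c S = (fun p => c - p) '' S := by
    ext pp
    constructor
    · rintro ⟨p, hp, he⟩
      exact ⟨p, hp, by simp only; omega⟩
    · rintro ⟨p, hp, rfl⟩
      exact ⟨p, hp, by have := hb p hp; simp only; omega⟩
  rw [himg]
  apply Set.ncard_image_of_injOn
  intro p1 h1 p2 h2 he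
  have := hb p1 h1
  have := hb p2 h2
  simp only at he
  omega

lemma Xs_odd' (M : ℕ) : Xs (2*M+1) = reflS M (Xs (M+1)) := Xs_odd M
lemma Ys_odd' (M : ℕ) : Ys (2*M+1) = reflS M (Ys (M+1)) := Ys_odd M
lemma Xs_even' (M : ℕ) : Xs (2*M+2) = reflS M (Ys (M+1)) ∪ reflS (M+1) (Ys (M+2)) := Xs_even M
lemma Ys_even' (M : ℕ) : Ys (2*M+2) = reflS M (Xs (M+1)) ∪ reflS (M+1) (Xs (M+2)) := Ys_even M

lemma Xs_bound' {M p : ℕ} (h : p ∈ Xs (M+1)) : p ≤ M := by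
  have := Xs_bound h; omega

lemma Ys_bound' {M p : ℕ} (h : p ∈ Ys (M+1)) : p ≤ M := by
  have := Ys_bound h; omega

/-- E8: the key cardinality identity -/
lemma KS_eq (n : ℕ) : KS (4*n+1) = reflS (2*n) (Ys (2*n+1)) := by
  have hXa : Xs (4*n+2) = reflS (2*n) (Ys (2*n+1)) ∪ reflS (2*n+1) (Ys (2*n+2)) := by
    have := Xs_even' (2*n)
    rw [show 2*(2*n)+2 = 4*n+2 from by ring, show 2*n+1+1 = 2*n+2 from rfl,
        show 2*n+2 = 2*n+2 from rfl] at this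
    rw [show (4*n+1)+1 = 4*n+2 from by ring]
    exact this
  have hXb : Xs (4*n+3) = reflS (2*n+1) (Xs (2*n+2)) := by
    have := Xs_odd' (2*n+1)
    rw [show 2*(2*n+1)+1 = 4*n+3 from by ring, show 2*n+1+1 = 2*n+2 from rfl] at this
    exact this
  ext p
  constructor
  · rintro ⟨hp1, hp2⟩
    rw [show (4*n+1)+1 = 4*n+2 from by ring] at hp1
    rw [show (4*n+1)+2 = 4*n+3 from by ring] at hp2
    rw [hXa] at hp1
    rw [hXb] at hp2
    obtain ⟨v, hv, hev⟩ := hp2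
    rcases hp1 with ⟨u, hu, heu⟩ | ⟨w, hw, hew⟩
    · exact ⟨u, hu, heu⟩
    · have hvw : v + 1 = w := by omega
      have hv1 : v + 1 ∈ Ys (2*n+2) := by rw [hvw]; exact hw
      refine ⟨v, keyii n v hv hv1, by omega⟩
  · rintro ⟨u, hu, he⟩
    constructor
    · rw [show (4*n+1)+1 = 4*n+2 from by ring, hXa]
      exact Or.inl ⟨u, hu, he⟩
    · rw [show (4*n+1)+2 = 4*n+3 from by ring, hXb]
      exact ⟨u, keyi n hu, by omega⟩

lemma KS_ncard_eq (n : ℕ) : (KS (4*n+1)).ncard = (Ys (2*n+1)).ncard := by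
  rw [KS_eq n]
  apply reflS_ncard
  · intro p hp
    have := Ys_bound hp
    omega
  · exact Ys_finite _

/-- E7 -/
lemma Ya_ncard (n : ℕ) :
    (Ys (4*n+2)).ncard + (KS (2*n)).ncard = (Xs (2*n+1)).ncard + (Xs (2*n+2)).ncard := by
  have hY : Ys (4*n+2) = reflS (2*n) (Xs (2*n+1)) ∪ reflS (2*n+1) (Xs (2*n+2)) := by
    have := Ys_even' (2*n)
    rw [show 2*(2*n)+2 = 4*n+2 from by ring, show 2*n+1+1 = 2*n+2 from rfl] at this
    exact this
  have hint : reflS (2*n) (Xs (2*n+1)) ∩ reflS (2*n+1) (Xs (2*n+2)) = reflS (2*n) (KS (2*n)) := by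
    ext pp
    constructor
    · rintro ⟨⟨u, hu, he⟩, ⟨v, hv, he'⟩⟩
      have : v = u + 1 := by omega
      subst this
      exact ⟨u, ⟨hu, hv⟩, he⟩
    · rintro ⟨u, ⟨hu1, hu2⟩, he⟩
      exact ⟨⟨u, hu1, he⟩, ⟨u + 1, hu2, by omega⟩⟩
  have f1 := reflS_finite (2*n) (Xs (2*n+1))
  have f2 := reflS_finite (2*n+1) (Xs (2*n+2))
  have h := Set.ncard_union_add_ncard_inter _ _ f1 f2
  rw [hint] at h
  have c1 : (reflS (2*n) (Xs (2*n+1))).ncard = (Xs (2*n+1)).ncard :=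
    reflS_ncard _ _ (fun p hp => Xs_bound' hp) (Xs_finite _)
  have c2 : (reflS (2*n+1) (Xs (2*n+2))).ncard = (Xs (2*n+2)).ncard :=
    reflS_ncard _ _ (fun p hp => Xs_bound' hp) (Xs_finite _)
  have c3 : (reflS (2*n) (KS (2*n))).ncard = (KS (2*n)).ncard := by
    apply reflS_ncard
    · intro p hp
      exact Xs_bound' hp.1
    · exact KS_finite _
  rw [c1, c2, c3, ← hY] at h
  omega

/-- E5 -/
lemma Xb_ncard (n : ℕ) : (Xs (4*n+3)).ncard = (Xs (2*n+2)).ncard := by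
  have hXb : Xs (4*n+3) = reflS (2*n+1) (Xs (2*n+2)) := by
    have := Xs_odd' (2*n+1)
    rw [show 2*(2*n+1)+1 = 4*n+3 from by ring, show 2*n+1+1 = 2*n+2 from rfl] at this
    exact this
  rw [hXb]
  exact reflS_ncard _ _ (fun p hp => Xs_bound' hp) (Xs_finite _)

/-- E6 -/
lemma Yb_ncard (n : ℕ) : (Ys (4*n+3)).ncard = (Ys (2*n+2)).ncard := by
  have hYb : Ys (4*n+3) = reflS (2*n+1) (Ys (2*n+2)) := by
    have := Ys_odd' (2*n+1)
    rw [show 2*(2*n+1)+1 = 4*n+3 from by ring, show 2*n+1+1 = 2*n+2 from rfl] at this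
    exact this
  rw [hYb]
  exact reflS_ncard _ _ (fun p hp => Ys_bound' hp) (Ys_finite _)

theorem final_identity (n : ℕ) :
    P (8 * n + 4) + P (4 * n + 2) = P (8 * n + 3) + P (4 * n + 3) := by
  have E1 := P_even_formula (4*n+1)
  rw [show 2*(4*n+1)+2 = 8*n+4 from by ring, show (4*n+1)+1 = 4*n+2 from by ring,
      show (4*n+1)+2 = 4*n+3 from by ring] at E1
  have E2 := P_even_formula (2*n)
  rw [show 2*(2*n)+2 = 4*n+2 from by ring, show (2*n)+1 = 2*n+1 from rfl,
      show (2*n)+2 = 2*n+2 from rfl] at E2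
  have E3 := P_odd_formula (4*n+1)
  rw [show 2*(4*n+1)+1 = 8*n+3 from by ring, show (4*n+1)+1 = 4*n+2 from by ring] at E3
  have E4 := P_odd_formula (2*n+1)
  rw [show 2*(2*n+1)+1 = 4*n+3 from by ring, show (2*n+1)+1 = 2*n+2 from rfl] at E4
  have E5 := Xb_ncard n
  have E6 := Yb_ncard n
  have E7 := Ya_ncard n
  have E8 := KS_ncard_eq n
  omega

end Final

theorem thueMorse_P_eight_n_add_four (n : ℕ) :
    P (8 * n + 4) + P (4 * n + 2) = P (8 * n + 3) + P (4 * n + 3) := by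
  exact final_identity n
end

section
/- Every factor of the Thue–Morse word of length at least 4 occurs only at positions of a single parity: if w is a binary word of length n ≥ 4 and i, j are indices such that w(k) = t(i+k) and w(k) = t(j+k) for all k < n, then i ≡ j (mod 2). -/
lemma tm_two_mul (n : ℕ) : tm (2 * n) = tm n := by
  rcases Nat.eq_zero_or_pos n with h | h
  · simp [h]
  · unfold tm
    rw [Nat.digits_def' (by norm_num : 1 < 2) (by omega)]
    simp [Nat.mul_div_cancel_left, Nat.mul_mod_right]

open Fin.NatCast in
lemma tm_two_mul_add_one (n : ℕ) : tm (2 * n + 1) = tm n + 1 := by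
  unfold tm
  rw [Nat.digits_def' (by norm_num : 1 < 2) (by omega)]
  have h1 : (2 * n + 1) % 2 = 1 := by omega
  have h2 : (2 * n + 1) / 2 = n := by omega
  rw [h1, h2]
  push_cast [List.map_cons, List.sum_cons]
  exact add_comm _ _

lemma fin2_add (x : Fin 2) : x + 1 + 1 = x := by revert x; decide

lemma fin2_ne (x : Fin 2) : x ≠ x + 1 := by revert x; decide

lemma tm_no_triple (b : ℕ) : ¬ (tm b = tm (b + 1) ∧ tm (b + 1) = tm (b + 2)) := by
  rintro ⟨h1, h2⟩
  rcases Nat.even_or_odd b with ⟨m, hm⟩ | ⟨m, hm⟩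
  · have hb : b = 2 * m := by omega
    rw [hb, tm_two_mul, tm_two_mul_add_one] at h1
    exact fin2_ne (tm m) h1
  · have hb1 : b + 1 = 2 * (m + 1) := by omega
    have hb2 : b + 2 = 2 * (m + 1) + 1 := by omega
    rw [hb1, hb2, tm_two_mul, tm_two_mul_add_one] at h2
    exact fin2_ne (tm (m + 1)) h2

lemma helper (a b : ℕ) (w : ℕ → Fin 2)
    (hi : ∀ k < 4, w k = tm (2 * a + k)) (hj : ∀ k < 4, w k = tm (2 * b + 1 + k)) :
    False := by
  have e1 : w 0 = tm a := by rw [hi 0 (by norm_num)]; simpa using tm_two_mul a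
  have e2 : w 1 = tm a + 1 := by rw [hi 1 (by norm_num)]; exact tm_two_mul_add_one a
  have e3 : w 2 = tm (a + 1) := by
    rw [hi 2 (by norm_num)]
    have : 2 * a + 2 = 2 * (a + 1) := by ring
    rw [this]; exact tm_two_mul (a + 1)
  have e4 : w 3 = tm (a + 1) + 1 := by
    rw [hi 3 (by norm_num)]
    have : 2 * a + 3 = 2 * (a + 1) + 1 := by ring
    rw [this]; exact tm_two_mul_add_one (a + 1)
  have f1 : w 0 = tm b + 1 := by rw [hj 0 (by norm_num)]; exact tm_two_mul_add_one b
  have f2 : w 1 = tm (b + 1) := by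
    rw [hj 1 (by norm_num)]
    have : 2 * b + 1 + 1 = 2 * (b + 1) := by ring
    rw [this]; exact tm_two_mul (b + 1)
  have f3 : w 2 = tm (b + 1) + 1 := by
    rw [hj 2 (by norm_num)]
    have : 2 * b + 1 + 2 = 2 * (b + 1) + 1 := by ring
    rw [this]; exact tm_two_mul_add_one (b + 1)
  have f4 : w 3 = tm (b + 2) := by
    rw [hj 3 (by norm_num)]
    have : 2 * b + 1 + 3 = 2 * (b + 2) := by ring
    rw [this]; exact tm_two_mul (b + 2)
  apply tm_no_triple b
  constructor
  · -- tm b = tm (b+1)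
    have h : tm (b + 1) = tm b + 1 + 1 := by
      rw [← f2, e2, ← e1, f1]
    rw [h, fin2_add]
  · -- tm (b+1) = tm (b+2)
    have h : tm (b + 2) = tm (b + 1) + 1 + 1 := by
      rw [← f4, e4, ← e3, f3]
    rw [h, fin2_add]

theorem thueMorse_factor_positions_same_parity (n : ℕ) (hn : 4 ≤ n)
    (w : ℕ → Fin 2) (i j : ℕ)
    (hi : ∀ k < n, w k = tm (i + k)) (hj : ∀ k < n, w k = tm (j + k)) :
    i % 2 = j % 2 := by
  have hi4 : ∀ k < 4, w k = tm (i + k) := fun k hk => hi k (by omega)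
  have hj4 : ∀ k < 4, w k = tm (j + k) := fun k hk => hj k (by omega)
  by_contra hne
  have hi2 := Nat.mod_two_eq_zero_or_one i
  have hj2 := Nat.mod_two_eq_zero_or_one j
  rcases hi2 with h1 | h1 <;> rcases hj2 with h2 | h2
  · omega
  · exact helper (i / 2) (j / 2) w
      (fun k hk => by rw [hi4 k hk]; congr 1; omega)
      (fun k hk => by rw [hj4 k hk]; congr 1; omega)
  · exact helper (j / 2) (i / 2) w
      (fun k hk => by rw [hj4 k hk]; congr 1; omega)
      (fun k hk => by rw [hi4 k hk]; congr 1; omega)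
  · omega
end
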